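/- Let ν ≥ -1/2. For all y ≥ x > 0, the modified Bessel function of the first kind satisfies I_ν(y)/I_ν(x) ≤ e^{y-x} (y/x)^ν, given the ratio bound I_{ν+1}(z)/I_ν(z) < 1 for all z > 0 when combined with the recurrence z I_ν'(z) = ν I_ν(z) + z I_{ν+1}(z). -/

import Mathlib

open Real

/-- Modified Bessel function of the first kind, defined by its series. -/
noncomputable def besselI (ν z : ℝ) : ℝ :=
  ∑' k : ℕ, (z / 2) ^ (ν + 2 * (k : ℝ)) / ((Nat.factorial k : ℝ) * Real.Gamma ((k : ℝ) + ν + 1))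

noncomputable def lfTerm (ν z : ℝ) (k : ℕ) : ℝ :=
  (z / 2) ^ (ν + 2 * (k : ℝ)) / ((Nat.factorial k : ℝ) * Real.Gamma ((k : ℝ) + ν + 1))

lemma besselI_eq (ν z : ℝ) : besselI ν z = ∑' k, lfTerm ν z k := rfl

lemma lf_gamma_pos (ν : ℝ) (hν : -1/2 ≤ ν) (k : ℕ) : 0 < Real.Gamma ((k : ℝ) + ν + 1) :=
  Real.Gamma_pos_of_pos (by have : (0:ℝ) ≤ k := Nat.cast_nonneg k; linarith)

lemma lf_gamma_lower (ν : ℝ) (hν : -1/2 ≤ ν) (k : ℕ) :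
    Real.Gamma (ν + 1) * (Nat.factorial k : ℝ) ≤ 2 ^ k * Real.Gamma ((k : ℝ) + ν + 1) := by
  induction k with
  | zero => simp
  | succ k ih =>
    have hk : (0:ℝ) ≤ k := Nat.cast_nonneg k
    have hpos : (0:ℝ) < (k : ℝ) + ν + 1 := by linarith
    have hg := Real.Gamma_pos_of_pos hpos
    have key : Real.Gamma (((k + 1 : ℕ) : ℝ) + ν + 1)
        = ((k : ℝ) + ν + 1) * Real.Gamma ((k : ℝ) + ν + 1) := by
      push_cast
      rw [show (k : ℝ) + 1 + ν + 1 = ((k : ℝ) + ν + 1) + 1 by ring,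
        Real.Gamma_add_one hpos.ne']
    rw [key, Nat.factorial_succ, pow_succ]
    push_cast
    have h2 : (0:ℝ) < 2 ^ k := by positivity
    nlinarith [mul_le_mul_of_nonneg_left ih (by linarith : (0:ℝ) ≤ (k:ℝ) + 1),
      mul_nonneg (mul_nonneg h2.le hg.le) (by linarith : (0:ℝ) ≤ (k:ℝ) + 2*ν + 1)]

lemma lf_term_pos (ν : ℝ) (hν : -1/2 ≤ ν) {z : ℝ} (hz : 0 < z) (k : ℕ) :
    0 < lfTerm ν z k := by
  have h1 : (0:ℝ) < (z/2) ^ (ν + 2 * (k : ℝ)) := Real.rpow_pos_of_pos (by linarith) _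
  have h2 := lf_gamma_pos ν hν k
  have h3 : (0:ℝ) < (Nat.factorial k : ℝ) := by exact_mod_cast Nat.factorial_pos k
  exact div_pos h1 (mul_pos h3 h2)

lemma lf_rpow_split (w : ℝ) (hw : 0 < w) (ν : ℝ) (k : ℕ) :
    w ^ (ν + 2 * (k : ℝ)) = w ^ ν * (w ^ 2) ^ k := by
  rw [Real.rpow_add hw, show (2 * (k : ℝ)) = ((2 * k : ℕ) : ℝ) by push_cast; ring,
    Real.rpow_natCast, pow_mul]

lemma lf_term_le (ν : ℝ) (hν : -1/2 ≤ ν) {z : ℝ} (hz : 0 < z) (k : ℕ) :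
    lfTerm ν z k ≤ ((z/2) ^ ν / Real.Gamma (ν + 1)) * ((2 * (z/2)^2) ^ k / (Nat.factorial k : ℝ)) := by
  have hz2 : (0:ℝ) < z / 2 := by linarith
  have hΓν : 0 < Real.Gamma (ν + 1) := Real.Gamma_pos_of_pos (by linarith)
  have hΓk := lf_gamma_pos ν hν k
  have hfac : (1:ℝ) ≤ (Nat.factorial k : ℝ) := by exact_mod_cast (Nat.factorial_pos k)
  have h2 : (0:ℝ) < 2 ^ k := by positivity
  have hden : Real.Gamma (ν + 1) * (Nat.factorial k : ℝ) / 2 ^ k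
      ≤ (Nat.factorial k : ℝ) * Real.Gamma ((k : ℝ) + ν + 1) := by
    rw [div_le_iff₀ h2]
    calc Real.Gamma (ν + 1) * (Nat.factorial k : ℝ)
        ≤ 2 ^ k * Real.Gamma ((k : ℝ) + ν + 1) := lf_gamma_lower ν hν k
      _ ≤ ((Nat.factorial k : ℝ) * Real.Gamma ((k : ℝ) + ν + 1)) * 2 ^ k := by
          nlinarith [mul_le_mul_of_nonneg_right hfac (mul_pos hΓk h2).le]
  have hnum : (0:ℝ) ≤ (z/2) ^ ν * ((z/2) ^ 2) ^ k := by positivity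
  have heq : ((z/2) ^ ν / Real.Gamma (ν + 1)) * ((2 * (z/2)^2) ^ k / (Nat.factorial k : ℝ))
      = ((z/2) ^ ν * ((z/2) ^ 2) ^ k) / (Real.Gamma (ν + 1) * (Nat.factorial k : ℝ) / 2 ^ k) := by
    rw [mul_pow]
    field_simp
  rw [lfTerm, lf_rpow_split _ hz2, heq]
  exact div_le_div_of_nonneg_left hnum (by positivity) hden

lemma lf_summable (ν : ℝ) (hν : -1/2 ≤ ν) {z : ℝ} (hz : 0 < z) :
    Summable (lfTerm ν z) := by
  refine Summable.of_nonneg_of_le (fun k => (lf_term_pos ν hν hz k).le)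
    (fun k => lf_term_le ν hν hz k) ?_
  exact (Real.summable_pow_div_factorial _).mul_left _

lemma besselI_pos (ν : ℝ) (hν : -1/2 ≤ ν) {z : ℝ} (hz : 0 < z) : 0 < besselI ν z := by
  rw [besselI_eq]
  exact Summable.tsum_pos (lf_summable ν hν hz) (fun k => (lf_term_pos ν hν hz k).le) 0
    (lf_term_pos ν hν hz 0)
set_option maxHeartbeats 1000000 in
lemma lf_differentiable (ν : ℝ) (hν : -1/2 ≤ ν) {z : ℝ} (hz : 0 < z) :
    DifferentiableAt ℝ (besselI ν) z := by
  have hb : (0:ℝ) < (z + 1) / 2 := by linarith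
  set b : ℝ := (z + 1) / 2 with hbdef
  set K : ℝ := (z/4) ^ (ν - 1) + b ^ (ν - 1) with hKdef
  have hKpos : 0 < K := by positivity
  have hΓν : 0 < Real.Gamma (ν + 1) := Real.Gamma_pos_of_pos (by linarith)
  set C : ℝ := (|ν| + 2) * K / (2 * Real.Gamma (ν + 1)) with hCdef
  set u : ℕ → ℝ := fun k => C * ((4 * b ^ 2) ^ k / (Nat.factorial k : ℝ)) with hudef
  have husum : Summable u := (Real.summable_pow_div_factorial _).mul_left _
  set g' : ℕ → ℝ → ℝ := fun k y =>
    1/2 * (ν + 2 * (k : ℝ)) * (y/2) ^ (ν + 2 * (k : ℝ) - 1)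
      / ((Nat.factorial k : ℝ) * Real.Gamma ((k : ℝ) + ν + 1)) with hg'def
  have hmem : z ∈ Set.Ioo (z/2) (z + 1) := by constructor <;> linarith
  have hderiv : ∀ (k : ℕ), ∀ y ∈ Set.Ioo (z/2) (z + 1),
      HasDerivAt (fun w => lfTerm ν w k) (g' k y) y := by
    intro k y hy
    have hy0 : 0 < y := lt_trans (by linarith) hy.1
    have h1 : HasDerivAt (fun w : ℝ => w / 2) (1/2) y := (hasDerivAt_id y).div_const 2
    have h2 := h1.rpow_const (p := ν + 2 * (k : ℝ)) (Or.inl (by positivity))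
    exact h2.div_const _
  have hbound : ∀ (k : ℕ), ∀ y ∈ Set.Ioo (z/2) (z + 1), ‖g' k y‖ ≤ u k := by
    intro k y hy
    have hy0 : 0 < y := lt_trans (by linarith) hy.1
    have hy2 : 0 < y / 2 := by linarith
    have hΓk := lf_gamma_pos ν hν k
    have hfac : (1:ℝ) ≤ (Nat.factorial k : ℝ) := by exact_mod_cast (Nat.factorial_pos k)
    have h2k : (0:ℝ) < 2 ^ k := by positivity
    have h1le : (1:ℝ) ≤ 2 ^ k := one_le_pow₀ (by norm_num)
    have hklt : (k : ℝ) < 2 ^ k := by exact_mod_cast Nat.lt_two_pow_self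
    -- |ν + 2k| ≤ (|ν| + 2) * 2^k
    have habs : |ν + 2 * (k : ℝ)| ≤ (|ν| + 2) * 2 ^ k := by
      have h0 : |ν + 2 * (k : ℝ)| ≤ |ν| + 2 * (k : ℝ) := by
        have h00 := abs_add_le ν (2 * (k : ℝ))
        rwa [abs_of_nonneg (show (0:ℝ) ≤ 2 * (k : ℝ) by positivity)] at h00
      nlinarith [abs_nonneg ν]
    -- (y/2)^(ν+2k-1) ≤ K * (b^2)^k
    have hsplit : (y/2) ^ (ν + 2 * (k : ℝ) - 1) = (y/2) ^ (ν - 1) * ((y/2) ^ 2) ^ k := by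
      rw [show ν + 2 * (k : ℝ) - 1 = (ν - 1) + 2 * (k : ℝ) by ring]
      exact lf_rpow_split _ hy2 _ k
    have hbase : (y/2) ^ (ν - 1) ≤ K := by
      rcases le_or_gt (ν - 1) 0 with hc | hc
      · have : (y/2) ^ (ν - 1) ≤ (z/4) ^ (ν - 1) :=
          Real.rpow_le_rpow_of_nonpos (by linarith) (by linarith [hy.1]) hc
        have hb2 : (0:ℝ) ≤ b ^ (ν - 1) := Real.rpow_nonneg hb.le _
        rw [hKdef]; linarith
      · have : (y/2) ^ (ν - 1) ≤ b ^ (ν - 1) :=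
          Real.rpow_le_rpow hy2.le (by rw [hbdef]; linarith [hy.2]) hc.le
        have hb1 : (0:ℝ) ≤ (z/4) ^ (ν - 1) := Real.rpow_nonneg (by linarith) _
        rw [hKdef]; linarith
    have hsq : ((y/2) ^ 2) ^ k ≤ (b ^ 2) ^ k := by
      apply pow_le_pow_left₀ (by positivity)
      nlinarith [hy.2, hy0]
    have hpow : (y/2) ^ (ν + 2 * (k : ℝ) - 1) ≤ K * (b ^ 2) ^ k := by
      rw [hsplit]
      exact mul_le_mul hbase hsq (by positivity) hKpos.le
    have hnormeq : ‖g' k y‖ = 1/2 * |ν + 2 * (k : ℝ)| * (y/2) ^ (ν + 2 * (k : ℝ) - 1)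
        / ((Nat.factorial k : ℝ) * Real.Gamma ((k : ℝ) + ν + 1)) := by
      rw [hg'def]
      simp only [Real.norm_eq_abs, abs_div, abs_mul,
        abs_of_nonneg (Real.rpow_nonneg hy2.le (ν + 2 * (k : ℝ) - 1)),
        abs_of_pos hΓk,
        abs_of_nonneg (show (0:ℝ) ≤ (Nat.factorial k : ℝ) by positivity)]
      norm_num
    have hden : Real.Gamma (ν + 1) * (Nat.factorial k : ℝ) / 2 ^ k
        ≤ (Nat.factorial k : ℝ) * Real.Gamma ((k : ℝ) + ν + 1) := by
      rw [div_le_iff₀ h2k]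
      calc Real.Gamma (ν + 1) * (Nat.factorial k : ℝ)
          ≤ 2 ^ k * Real.Gamma ((k : ℝ) + ν + 1) := lf_gamma_lower ν hν k
        _ ≤ ((Nat.factorial k : ℝ) * Real.Gamma ((k : ℝ) + ν + 1)) * 2 ^ k := by
            nlinarith [mul_le_mul_of_nonneg_right hfac (mul_pos hΓk h2k).le]
    have hnum : 1/2 * |ν + 2 * (k : ℝ)| * (y/2) ^ (ν + 2 * (k : ℝ) - 1)
        ≤ 1/2 * ((|ν| + 2) * 2 ^ k) * (K * (b ^ 2) ^ k) := by
      have h := mul_le_mul habs hpow (Real.rpow_nonneg hy2.le _) (by positivity)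
      calc 1/2 * |ν + 2 * (k : ℝ)| * (y/2) ^ (ν + 2 * (k : ℝ) - 1)
          = 1/2 * (|ν + 2 * (k : ℝ)| * (y/2) ^ (ν + 2 * (k : ℝ) - 1)) := by ring
        _ ≤ 1/2 * (((|ν| + 2) * 2 ^ k) * (K * (b ^ 2) ^ k)) := by linarith
        _ = 1/2 * ((|ν| + 2) * 2 ^ k) * (K * (b ^ 2) ^ k) := by ring
    rw [hnormeq]
    calc 1/2 * |ν + 2 * (k : ℝ)| * (y/2) ^ (ν + 2 * (k : ℝ) - 1)
          / ((Nat.factorial k : ℝ) * Real.Gamma ((k : ℝ) + ν + 1))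
        ≤ (1/2 * ((|ν| + 2) * 2 ^ k) * (K * (b ^ 2) ^ k))
          / (Real.Gamma (ν + 1) * (Nat.factorial k : ℝ) / 2 ^ k) :=
          div_le_div₀ (by positivity) hnum (by positivity) hden
      _ = u k := by
          have h4 : ((4:ℝ) * b ^ 2) ^ k = 2 ^ k * (2 ^ k * (b ^ 2) ^ k) := by
            rw [show (4:ℝ) * b ^ 2 = 2 * (2 * b ^ 2) by ring, mul_pow, mul_pow]
          simp only [hudef, hCdef, h4]
          field_simp
  have H := hasDerivAt_tsum_of_isPreconnected husum isOpen_Ioo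
    ((convex_Ioo _ _).isPreconnected) hderiv hbound hmem
    (lf_summable ν hν hz) hmem
  have hfun : besselI ν = fun w => ∑' k, lfTerm ν w k := rfl
  rw [hfun]
  exact H.differentiableAt
theorem laforgia_inequality (ν : ℝ) (hν : -1/2 ≤ ν)
    (hrec : ∀ z : ℝ, 0 < z →
      z * deriv (besselI ν) z = ν * besselI ν z + z * besselI (ν + 1) z)
    (hratio : ∀ z : ℝ, 0 < z → besselI (ν + 1) z / besselI ν z < 1)
    (x y : ℝ) (hx : 0 < x) (hxy : x ≤ y) :
    besselI ν y / besselI ν x ≤ Real.exp (y - x) * (y / x) ^ ν := by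
  have hI : ∀ z : ℝ, 0 < z → 0 < besselI ν z := fun z hz => besselI_pos ν hν hz
  have hI1 : ∀ z : ℝ, 0 < z → 0 < besselI (ν + 1) z :=
    fun z hz => besselI_pos (ν + 1) (by linarith) hz
  set F : ℝ → ℝ := fun w => Real.exp (-w) * w ^ (-ν) * besselI ν w with hFdef
  have hF' : ∀ w : ℝ, 0 < w →
      HasDerivAt F (Real.exp (-w) * w ^ (-ν) * (besselI (ν + 1) w - besselI ν w)) w := by
    intro w hw
    have hd := (lf_differentiable ν hν hw).hasDerivAt
    have hD : deriv (besselI ν) w = (ν * besselI ν w + w * besselI (ν + 1) w) / w := by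
      rw [eq_div_iff hw.ne']
      linear_combination hrec w hw
    have h1 : HasDerivAt (fun w : ℝ => Real.exp (-w)) (-Real.exp (-w)) w := by
      simpa using ((hasDerivAt_id w).neg).exp
    have h2 : HasDerivAt (fun w : ℝ => w ^ (-ν)) (-ν * w ^ (-ν - 1)) w :=
      Real.hasDerivAt_rpow_const (Or.inl hw.ne')
    have h3 := (h1.mul h2).mul hd
    convert h3 using 1
    · rfl
    · rfl
    · rfl
    rw [hD, show w ^ (-ν - 1) = w ^ (-ν) / w from Real.rpow_sub_one hw.ne' (-ν)]
    simp only [Pi.mul_apply]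
    field_simp
    ring
  have hanti : StrictAntiOn F (Set.Ioi 0) := by
    apply strictAntiOn_of_deriv_neg (convex_Ioi 0)
    · intro w hw
      exact (hF' w hw).differentiableAt.continuousAt.continuousWithinAt
    · intro w hw
      rw [interior_Ioi] at hw
      rw [(hF' w hw).deriv]
      have h1 := hI w hw
      have hlt : besselI (ν + 1) w < besselI ν w := (div_lt_one h1).mp (hratio w hw)
      have he : (0:ℝ) < Real.exp (-w) * w ^ (-ν) :=
        mul_pos (Real.exp_pos _) (Real.rpow_pos_of_pos hw _)
      exact mul_neg_of_pos_of_neg he (by linarith)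
  have hy0 : 0 < y := lt_of_lt_of_le hx hxy
  have hle : F y ≤ F x := by
    rcases eq_or_lt_of_le hxy with h | h
    · rw [h]
    · exact (hanti (Set.mem_Ioi.mpr hx) (Set.mem_Ioi.mpr hy0) h).le
  have hle' : (Real.exp y)⁻¹ * (y ^ ν)⁻¹ * besselI ν y
      ≤ (Real.exp x)⁻¹ * (x ^ ν)⁻¹ * besselI ν x := by
    have h := hle
    rw [hFdef] at h
    simp only [Real.exp_neg, Real.rpow_neg hy0.le, Real.rpow_neg hx.le] at h
    exact h
  have hIx := hI x hx
  rw [div_le_iff₀ hIx]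
  have key : besselI ν y ≤ (Real.exp y * y ^ ν) * ((Real.exp x)⁻¹ * (x ^ ν)⁻¹ * besselI ν x) := by
    have h0 : besselI ν y
        = (Real.exp y * y ^ ν) * ((Real.exp y)⁻¹ * (y ^ ν)⁻¹ * besselI ν y) := by
      have e1 : Real.exp y ≠ 0 := (Real.exp_pos y).ne'
      have e2 : y ^ ν ≠ 0 := (Real.rpow_pos_of_pos hy0 ν).ne'
      field_simp
    rw [h0]
    exact mul_le_mul_of_nonneg_left hle' (by positivity)
  have heq : Real.exp (y - x) * (y / x) ^ ν * besselI ν x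
      = (Real.exp y * y ^ ν) * ((Real.exp x)⁻¹ * (x ^ ν)⁻¹ * besselI ν x) := by
    rw [Real.exp_sub, Real.div_rpow hy0.le hx.le]
    have e1 : Real.exp x ≠ 0 := (Real.exp_pos x).ne'
    have e2 : x ^ ν ≠ 0 := (Real.rpow_pos_of_pos hx ν).ne'
    field_simp
  rw [heq]
  exact key
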